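/- Consider n processes in ℝ^d executing an averaging algorithm where each round's communication graph is k-broadcastable (k ≥ 1) with broadcasting set M(t) and minimum broadcasting weight α > 0, i.e., x_i(t) = Σ_j w_{ij}(t) x_j(t−1) with nonnegative weights summing to 1 and Σ_{j∈M(t)} w_{ij}(t) ≥ α. Let Π_t be the orthogonal projection onto the orthogonal complement of dir(X_{M(t)}(t−1)), the span of differences of round-(t−1) values of processes in M(t). Then Δ_{Π_t}(X(t)) ≤ (1−α) · Δ_{Π_t}(X(t−1)), where Δ_Π(X) = max_{x,y∈X} ‖Π(x−y)‖ and X(t) = {x_i(t) : i ∈ [n]}. -/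

import Mathlib

lemma key_conv {E : Type*} [NormedAddCommGroup E] [NormedSpace ℝ E] {n : ℕ}
    (v : Fin n → E) (lam mu : Fin n → ℝ) (hlam0 : ∀ l, 0 ≤ lam l) (hmu0 : ∀ l, 0 ≤ mu l)
    (c : ℝ) (hlam : ∑ l, lam l = c) (hmu : ∑ l, mu l = c)
    (K : ℝ) (hK : ∀ l s, ‖v l - v s‖ ≤ K) :
    ‖(∑ l, lam l • v l) - ∑ l, mu l • v l‖ ≤ c * K := by
  have hc0 : 0 ≤ c := hlam ▸ Finset.sum_nonneg fun l _ => hlam0 l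
  rcases hc0.eq_or_lt with hc | hc
  · have h1 : ∀ l ∈ Finset.univ, lam l = 0 :=
      (Finset.sum_eq_zero_iff_of_nonneg (fun l _ => hlam0 l)).mp (hlam.trans hc.symm)
    have h2 : ∀ l ∈ Finset.univ, mu l = 0 :=
      (Finset.sum_eq_zero_iff_of_nonneg (fun l _ => hmu0 l)).mp (hmu.trans hc.symm)
    rw [show (∑ l, lam l • v l) = 0 from Finset.sum_eq_zero fun l hl => by
        rw [h1 l hl, zero_smul],
      show (∑ l, mu l • v l) = 0 from Finset.sum_eq_zero fun l hl => by
        rw [h2 l hl, zero_smul], ← hc]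
    simp
  · have h1 : ∑ l, ∑ s, (lam l * mu s) • v l = c • ∑ l, lam l • v l := by
      rw [Finset.smul_sum]
      refine Finset.sum_congr rfl fun l _ => ?_
      rw [← Finset.sum_smul, ← Finset.mul_sum, hmu, smul_smul, mul_comm (lam l) c]
    have h2 : ∑ l, ∑ s, (lam l * mu s) • v s = c • ∑ s, mu s • v s := by
      rw [Finset.sum_comm, Finset.smul_sum]
      refine Finset.sum_congr rfl fun s _ => ?_
      rw [← Finset.sum_smul, ← Finset.sum_mul, hlam, smul_smul]
    have hmain : c • ((∑ l, lam l • v l) - ∑ l, mu l • v l)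
        = ∑ l, ∑ s, (lam l * mu s) • (v l - v s) := by
      simp only [smul_sub, Finset.sum_sub_distrib]
      rw [h1, h2]
    have hbound : ‖∑ l, ∑ s, (lam l * mu s) • (v l - v s)‖ ≤ c * (c * K) := by
      calc ‖∑ l, ∑ s, (lam l * mu s) • (v l - v s)‖
          ≤ ∑ l, ∑ s, ‖(lam l * mu s) • (v l - v s)‖ := by
            refine (norm_sum_le _ _).trans (Finset.sum_le_sum fun l _ => norm_sum_le _ _)
        _ ≤ ∑ l, ∑ s, lam l * mu s * K := by
            refine Finset.sum_le_sum fun l _ => Finset.sum_le_sum fun s _ => ?_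
            rw [norm_smul, Real.norm_eq_abs,
              abs_of_nonneg (mul_nonneg (hlam0 l) (hmu0 s))]
            exact mul_le_mul_of_nonneg_left (hK l s) (mul_nonneg (hlam0 l) (hmu0 s))
        _ = c * (c * K) := by
            have h3 : ∀ l, ∑ s, lam l * mu s * K = lam l * (c * K) := fun l => by
              rw [← Finset.sum_mul, ← Finset.mul_sum, hmu]; ring
            rw [Finset.sum_congr rfl fun l _ => h3 l, ← Finset.sum_mul, hlam]
    have := hmain ▸ hbound
    rw [norm_smul, Real.norm_eq_abs, abs_of_pos hc] at this
    exact le_of_mul_le_mul_left this hc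

theorem thickness_one_round_contraction {d n : ℕ} (hn : 0 < n)
    (p : Fin n → EuclideanSpace ℝ (Fin d))
    (M : Finset (Fin n)) (hM : M.Nonempty)
    (w : Fin n → Fin n → ℝ)
    (hw : ∀ i j, 0 ≤ w i j) (hw1 : ∀ i, ∑ j, w i j = 1)
    (α : ℝ) (hα : α ∈ Set.Ioc (0:ℝ) 1)
    (hαM : ∀ i, α ≤ ∑ j ∈ M, w i j)
    (x' : Fin n → EuclideanSpace ℝ (Fin d))
    (hx' : ∀ i, x' i = ∑ j, w i j • p j)
    (D : Submodule ℝ (EuclideanSpace ℝ (Fin d)))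
    (hD : D = Submodule.span ℝ {u | ∃ i ∈ M, ∃ j ∈ M, u = p i - p j}) :
    ∀ i j : Fin n,
      ‖(Submodule.orthogonalProjectionOnto Dᗮ (x' i - x' j) : EuclideanSpace ℝ (Fin d))‖ ≤
        (1 - α) *
          ((Finset.univ ×ˢ Finset.univ).sup'
            (by simp [Finset.univ_nonempty_iff, ← Fin.pos_iff_nonempty, hn])
            fun q : Fin n × Fin n =>
              ‖(Submodule.orthogonalProjectionOnto Dᗮ (p q.1 - p q.2) : EuclideanSpace ℝ (Fin d))‖) := by
  intro i j
  obtain ⟨m, hm⟩ := hM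
  set Q : EuclideanSpace ℝ (Fin d) →L[ℝ] EuclideanSpace ℝ (Fin d) := Dᗮ.subtypeL.comp (Submodule.orthogonalProjectionOnto Dᗮ) with hQ
  have hQcoe : ∀ v : EuclideanSpace ℝ (Fin d),
      ((Submodule.orthogonalProjectionOnto Dᗮ v : EuclideanSpace ℝ (Fin d))) = Q v := fun v => rfl
  -- Q kills differences within M
  have hker : ∀ l ∈ M, ∀ s ∈ M, Q (p l) = Q (p s) := by
    intro l hl s hs
    have hmem : p l - p s ∈ D := hD ▸ Submodule.subset_span ⟨l, hl, s, hs, rfl⟩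
    have h0 : Submodule.orthogonalProjectionOnto Dᗮ (p l - p s) = 0 :=
      Submodule.orthogonalProjectionOnto_apply_of_mem_orthogonal
        (D.le_orthogonal_orthogonal hmem)
    have : Q (p l - p s) = 0 := by rw [← hQcoe, h0]; rfl
    rw [map_sub] at this
    exact sub_eq_zero.mp this
  set A : Fin n → ℝ := fun k => ∑ l ∈ M, w k l with hA
  have hApos : ∀ k, 0 < A k := fun k => lt_of_lt_of_le hα.1 (hαM k)
  set lam : Fin n → Fin n → ℝ :=
    fun k l => if l ∈ M then w k l * ((A k - α) / A k) else w k l with hlamdef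
  have hr : ∀ k, 0 ≤ (A k - α) / A k := fun k =>
    div_nonneg (by linarith [hαM k]) (hApos k).le
  have hlam0 : ∀ k l, 0 ≤ lam k l := by
    intro k l
    simp only [hlamdef]
    split
    · exact mul_nonneg (hw k l) (hr k)
    · exact hw k l
  have hsplit : ∀ (g : Fin n → ℝ), ∑ l, g l = ∑ l ∈ M, g l + ∑ l ∈ Mᶜ, g l := fun g =>
    (Finset.sum_add_sum_compl M g).symm
  have hlamM : ∀ k, ∑ l ∈ M, lam k l = A k - α := by
    intro k
    have h1 : ∑ l ∈ M, lam k l = (∑ l ∈ M, w k l) * ((A k - α) / A k) := by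
      rw [Finset.sum_mul]
      exact Finset.sum_congr rfl fun l hl => by simp only [hlamdef]; rw [if_pos hl]
    rw [h1]
    have hAk : (∑ l ∈ M, w k l) = A k := rfl
    rw [hAk, mul_comm]; exact div_mul_cancel₀ _ (hApos k).ne'
  have hlamMc : ∀ k, ∑ l ∈ Mᶜ, lam k l = ∑ l ∈ Mᶜ, w k l := fun k =>
    Finset.sum_congr rfl fun l hl => by
      simp only [hlamdef]; rw [if_neg (Finset.mem_compl.mp hl)]
  have hlamsum : ∀ k, ∑ l, lam k l = 1 - α := by
    intro k
    have h1 := hsplit (w k)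
    rw [hw1 k] at h1
    rw [hsplit (lam k), hlamM k, hlamMc k]
    simp only [hA] at h1 ⊢
    linarith
  have hQx : ∀ k, Q (x' k) = ∑ l, w k l • Q (p l) := by
    intro k
    rw [hx' k, map_sum]
    exact Finset.sum_congr rfl fun l _ => Q.map_smul _ _
  have key : ∀ k, Q (x' k) = α • Q (p m) + ∑ l, lam k l • Q (p l) := by
    intro k
    have e1 : ∑ l ∈ M, w k l • Q (p l) = A k • Q (p m) := by
      calc ∑ l ∈ M, w k l • Q (p l) = ∑ l ∈ M, w k l • Q (p m) :=
            Finset.sum_congr rfl fun l hl => by rw [hker l hl m hm]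
        _ = A k • Q (p m) := by rw [← Finset.sum_smul]
    have e2 : ∑ l ∈ M, lam k l • Q (p l) = (A k - α) • Q (p m) := by
      calc ∑ l ∈ M, lam k l • Q (p l)
          = ∑ l ∈ M, (w k l * ((A k - α) / A k)) • Q (p m) :=
            Finset.sum_congr rfl fun l hl => by
              simp only [hlamdef]; rw [if_pos hl, hker l hl m hm]
        _ = ((∑ l ∈ M, w k l) * ((A k - α) / A k)) • Q (p m) := by
            rw [← Finset.sum_smul, Finset.sum_mul]
        _ = (A k - α) • Q (p m) := by
            congr 1
            have hAk : (∑ l ∈ M, w k l) = A k := rfl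
            rw [hAk, mul_comm]; exact div_mul_cancel₀ _ (hApos k).ne'
    have e3 : ∑ l ∈ Mᶜ, lam k l • Q (p l) = ∑ l ∈ Mᶜ, w k l • Q (p l) :=
      Finset.sum_congr rfl fun l hl => by
        simp only [hlamdef]; rw [if_neg (Finset.mem_compl.mp hl)]
    rw [hQx k, ← Finset.sum_add_sum_compl M (fun l => w k l • Q (p l)),
      ← Finset.sum_add_sum_compl M (fun l => lam k l • Q (p l)), e1, e2, e3,
      ← add_assoc, ← add_smul]
    congr 2
    ring
  have hfin : Q (x' i - x' j) = (∑ l, lam i l • Q (p l)) - ∑ l, lam j l • Q (p l) := by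
    rw [map_sub, key i, key j]
    abel
  rw [hQcoe, hfin]
  refine key_conv _ _ _ (hlam0 i) (hlam0 j) (1 - α) (hlamsum i) (hlamsum j) _ ?_
  intro l s
  have hmem : (l, s) ∈ Finset.univ ×ˢ (Finset.univ : Finset (Fin n)) :=
    Finset.mem_product.mpr ⟨Finset.mem_univ l, Finset.mem_univ s⟩
  calc ‖Q (p l) - Q (p s)‖
      = ‖(Submodule.orthogonalProjectionOnto Dᗮ (p l - p s) : EuclideanSpace ℝ (Fin d))‖ := by
        rw [hQcoe, map_sub]
    _ ≤ _ := Finset.le_sup'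
        (fun q : Fin n × Fin n =>
          ‖(Submodule.orthogonalProjectionOnto Dᗮ (p q.1 - p q.2) : EuclideanSpace ℝ (Fin d))‖) hmem
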